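/- Let m ≥ 1 be an integer. There exist constants C > 0 and N ∈ ℕ such that for all integers j ≥ N and all complex λ with |λ - j^{2m}| = (1/2) j^{2m-1}, the series ∑_{n=1}^{∞} 1/|λ - n^{2m}| converges and is bounded by C j^{1-2m} ln(j). -/

import Mathlib

open Real

lemma aux_nat_abs {a b : ℕ} (h : a ≠ b) : (1:ℝ) ≤ |(a:ℝ) - b| := by
  rcases h.lt_or_gt with hlt | hlt
  · rw [abs_sub_comm, abs_of_nonneg (sub_nonneg.mpr (Nat.cast_le.mpr hlt.le))]
    have : (a:ℝ) + 1 ≤ b := by exact_mod_cast hlt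
    linarith
  · rw [abs_of_nonneg (sub_nonneg.mpr (Nat.cast_le.mpr hlt.le))]
    have : (b:ℝ) + 1 ≤ a := by exact_mod_cast hlt
    linarith

lemma aux_pow_gap (m : ℕ) (hm : 1 ≤ m) (j k : ℕ) :
    |(k:ℝ) - j| * (j:ℝ)^(2*m-1) ≤ |(k:ℝ)^(2*m) - (j:ℝ)^(2*m)| := by
  have h2m : 2*m = (2*m-1) + 1 := by omega
  set e := 2*m - 1 with he
  rw [h2m]
  have hj0 : (0:ℝ) ≤ (j:ℝ) := Nat.cast_nonneg j
  have hk0 : (0:ℝ) ≤ (k:ℝ) := Nat.cast_nonneg k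
  rcases le_total (j:ℕ) k with hjk | hjk
  · have hjkR : (j:ℝ) ≤ k := Nat.cast_le.mpr hjk
    have hp : (j:ℝ)^e ≤ (k:ℝ)^e := pow_le_pow_left₀ hj0 hjkR e
    rw [abs_of_nonneg (by linarith), abs_of_nonneg
      (sub_nonneg.mpr (pow_le_pow_left₀ hj0 hjkR _))]
    rw [pow_succ, pow_succ]
    nlinarith [pow_nonneg hj0 e, pow_nonneg hk0 e]
  · have hjkR : (k:ℝ) ≤ j := Nat.cast_le.mpr hjk
    have hp : (k:ℝ)^e ≤ (j:ℝ)^e := pow_le_pow_left₀ hk0 hjkR e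
    rw [abs_sub_comm, abs_of_nonneg (by linarith), abs_sub_comm, abs_of_nonneg
      (sub_nonneg.mpr (pow_le_pow_left₀ hk0 hjkR _))]
    rw [pow_succ, pow_succ]
    nlinarith [pow_nonneg hj0 e, pow_nonneg hk0 e]

set_option maxHeartbeats 1600000 in
theorem stmt_6 (m : ℕ) (hm : 1 ≤ m) :
    ∃ C > (0 : ℝ), ∃ N : ℕ, ∀ j : ℕ, N ≤ j → ∀ lam : ℂ,
      ‖lam - (j : ℂ) ^ (2 * m)‖ = (1 / 2) * (j : ℝ) ^ (2 * m - 1) →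
        Summable (fun n : ℕ => 1 / ‖lam - ((n : ℂ) + 1) ^ (2 * m)‖) ∧
          ∑' n : ℕ, 1 / ‖lam - ((n : ℂ) + 1) ^ (2 * m)‖
            ≤ C * (j : ℝ) ^ ((1 : ℝ) - 2 * m) * Real.log j := by
  refine ⟨13, by norm_num, 3, fun j hj lam hlam => ?_⟩
  set f : ℕ → ℝ := fun n => 1 / ‖lam - ((n : ℂ) + 1) ^ (2 * m)‖ with hf
  set R : ℝ := (j:ℝ)^(2*m-1) with hR
  have hj1 : (1:ℝ) ≤ (j:ℝ) := by exact_mod_cast (by omega : 1 ≤ j)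
  have hj3 : (3:ℝ) ≤ (j:ℝ) := by exact_mod_cast hj
  have hRpos : 0 < R := by positivity
  have hfnonneg : ∀ n, 0 ≤ f n := fun n => by positivity
  -- Step 1 : triangle inequality lower bound
  have key : ∀ k : ℕ, |(k:ℝ)^(2*m) - (j:ℝ)^(2*m)| - (1/2)*R
      ≤ ‖lam - (k:ℂ)^(2*m)‖ := by
    intro k
    have h2 : ‖(k:ℂ)^(2*m) - (j:ℂ)^(2*m)‖ = |(k:ℝ)^(2*m) - (j:ℝ)^(2*m)| := by
      rw [show ((k:ℂ)^(2*m) - (j:ℂ)^(2*m)) = (((k:ℝ)^(2*m) - (j:ℝ)^(2*m) : ℝ) : ℂ) by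
        push_cast; ring, Complex.norm_real, Real.norm_eq_abs]
    have h1 : ‖(k:ℂ)^(2*m) - (j:ℂ)^(2*m)‖
        ≤ ‖lam - (k:ℂ)^(2*m)‖ + ‖lam - (j:ℂ)^(2*m)‖ := by
      have : (k:ℂ)^(2*m) - (j:ℂ)^(2*m) = (lam - (j:ℂ)^(2*m)) - (lam - (k:ℂ)^(2*m)) := by ring
      rw [this]
      simpa [add_comm] using norm_sub_le (lam - (j:ℂ)^(2*m)) (lam - (k:ℂ)^(2*m))
    rw [h2, hlam] at h1
    linarith
  -- D n : effective distance
  set D : ℕ → ℝ := fun n => max |((n:ℝ)+1) - j| 1 with hD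
  have hD1 : ∀ n, (1:ℝ) ≤ D n := fun n => le_max_right _ _
  -- step 3 : near bound
  have hlow : ∀ n : ℕ, (1/2) * (D n * R) ≤ ‖lam - ((n:ℂ)+1)^(2*m)‖ := by
    intro n
    have hk := key (n+1)
    have hgap := aux_pow_gap m hm j (n+1)
    push_cast at hk hgap
    by_cases hnj : n + 1 = j
    · have hjC : ((n:ℂ)+1) = (j:ℂ) := by exact_mod_cast congrArg (Nat.cast (R := ℂ)) hnj
      have hjR : ((n:ℝ)+1) = (j:ℝ) := by exact_mod_cast congrArg (Nat.cast (R := ℝ)) hnj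
      have hDn : D n = 1 := by simp [hD, hjR]
      rw [hjC, hlam, hDn]
      linarith
    · have hd1 : (1:ℝ) ≤ |((n:ℝ)+1) - j| := by
        have := aux_nat_abs (a := n+1) (b := j) hnj
        push_cast at this; exact this
      have hDn : D n = |((n:ℝ)+1) - j| := max_eq_left hd1
      rw [hDn]
      nlinarith [hRpos.le]
  have hf_near : ∀ n : ℕ, f n ≤ 2 / (D n * R) := by
    intro n
    have hpos : 0 < (1/2) * (D n * R) := by
      have := hD1 n; positivity
    have := one_div_le_one_div_of_le hpos (hlow n)
    calc f n ≤ 1 / ((1/2) * (D n * R)) := this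
      _ = 2 / (D n * R) := by rw [div_mul_eq_div_div]; norm_num
  -- step 4 : tail bound
  have htail : ∀ n : ℕ, 2*j ≤ n → f n ≤ 2 / ((n:ℝ)+1)^(2*m) := by
    intro n hn
    have hk := key (n+1)
    push_cast at hk
    have hnj : (j:ℝ) ≤ (n:ℝ)+1 := by
      have : (j:ℕ) ≤ n + 1 := by omega
      exact_mod_cast this
    have habs : |((n:ℝ)+1)^(2*m) - (j:ℝ)^(2*m)| = ((n:ℝ)+1)^(2*m) - (j:ℝ)^(2*m) :=
      abs_of_nonneg (sub_nonneg.mpr (pow_le_pow_left₀ (by positivity) hnj _))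
    rw [habs] at hk
    have h4 : 4*(j:ℝ)^(2*m) ≤ ((n:ℝ)+1)^(2*m) := by
      have h2j : (2*(j:ℝ))^(2*m) ≤ ((n:ℝ)+1)^(2*m) := by
        apply pow_le_pow_left₀ (by positivity)
        have : ((2*j:ℕ):ℝ) ≤ (n:ℝ) := Nat.cast_le.mpr hn
        push_cast at this; linarith
      have h22 : (4:ℝ) ≤ 2^(2*m) := by
        calc (4:ℝ) = 2^2 := by norm_num
          _ ≤ 2^(2*m) := pow_le_pow_right₀ (by norm_num) (by omega)
      calc 4*(j:ℝ)^(2*m) ≤ 2^(2*m)*(j:ℝ)^(2*m) := by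
            have : (0:ℝ) ≤ (j:ℝ)^(2*m) := by positivity
            nlinarith
        _ = (2*(j:ℝ))^(2*m) := by rw [mul_pow]
        _ ≤ ((n:ℝ)+1)^(2*m) := h2j
    have hRj : R ≤ (j:ℝ)^(2*m) := pow_le_pow_right₀ hj1 (by omega)
    have hlow2 : (1/2) * ((n:ℝ)+1)^(2*m) ≤ ‖lam - ((n:ℂ)+1)^(2*m)‖ := by
      nlinarith
    have hpos : 0 < (1/2) * ((n:ℝ)+1)^(2*m) := by positivity
    calc f n ≤ 1 / ((1/2) * ((n:ℝ)+1)^(2*m)) := one_div_le_one_div_of_le hpos hlow2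
      _ = 2 / ((n:ℝ)+1)^(2*m) := by rw [div_mul_eq_div_div]; norm_num
  -- Summability
  have hsum : Summable f := by
    rw [← summable_nat_add_iff (2*j)]
    have h1 : Summable (fun n : ℕ => 1/((n:ℝ))^2) := summable_one_div_nat_pow.mpr one_lt_two
    have h2 := (summable_nat_add_iff (f := fun n : ℕ => 1/((n:ℝ))^2) 1).mpr h1
    have h3 : (fun n : ℕ => 1/(((n+1:ℕ)):ℝ)^2) = (fun n : ℕ => 1/((n:ℝ)+1)^2) := by
      funext n; push_cast; ring
    rw [h3] at h2
    refine Summable.of_nonneg_of_le (fun n => hfnonneg _) (fun n => ?_) (h2.mul_left 2)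
    have hb := htail (n + 2*j) (by omega)
    push_cast at hb
    refine hb.trans ?_
    rw [mul_one_div]
    have hle : ((n:ℝ)+1)^2 ≤ ((n:ℝ)+2*j+1)^(2*m) := by
      calc ((n:ℝ)+1)^2 ≤ ((n:ℝ)+1)^(2*m) :=
            pow_le_pow_right₀ (by linarith [Nat.cast_nonneg (α := ℝ) n]) (by omega)
        _ ≤ ((n:ℝ)+2*j+1)^(2*m) := by
            apply pow_le_pow_left₀ (by positivity)
            linarith
    have hp : (0:ℝ) < ((n:ℝ)+1)^2 := by positivity
    exact div_le_div_of_nonneg_left (by norm_num) hp hle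
  refine ⟨hsum, ?_⟩
  -- split the sum
  have hsplit := (Summable.sum_add_tsum_nat_add (f := f) (2*j) hsum).symm
  -- tail estimate
  have htt : ∑' i : ℕ, f (i + 2*j) ≤ 1/R := by
    apply Real.tsum_le_of_sum_range_le (fun n => hfnonneg _)
    intro K
    set c : ℝ := 2/(2*(j:ℝ))^(2*m-2) with hc
    have hcpos : 0 < c := by positivity
    set G : ℕ → ℝ := fun i => c * (1/((i:ℝ)+2*j)) with hG
    have hterm : ∀ i ∈ Finset.range K, f (i + 2*j) ≤ G i - G (i+1) := by
      intro i _
      have hb := htail (i + 2*j) (by omega)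
      push_cast at hb
      have ha : (0:ℝ) < (i:ℝ) + 2*j := by
        have := Nat.cast_nonneg (α := ℝ) i; linarith
      have hGdiff : G i - G (i+1) = c * (1/(((i:ℝ)+2*j)*((i:ℝ)+2*j+1))) := by
        simp only [hG]
        push_cast
        rw [show ((i:ℝ) + 1 + 2*j) = ((i:ℝ) + 2*j) + 1 by ring]
        set a := (i:ℝ) + 2*j with hadef
        have ha0 : a ≠ 0 := ne_of_gt ha
        have ha1 : a + 1 ≠ 0 := by linarith
        field_simp
        ring
      rw [hGdiff]
      refine hb.trans ?_
      have hkey : ((i:ℝ)+2*j)*((i:ℝ)+2*j+1) * (2*(j:ℝ))^(2*m-2) ≤ ((i:ℝ)+2*j+1)^(2*m) := by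
        have h2m2 : 2*m = (2*m-2) + 2 := by omega
        have hb1 : (2*(j:ℝ))^(2*m-2) ≤ ((i:ℝ)+2*j+1)^(2*m-2) := by
          apply pow_le_pow_left₀ (by positivity)
          have := Nat.cast_nonneg (α := ℝ) i; linarith
        have hb2 : ((i:ℝ)+2*j)*((i:ℝ)+2*j+1) ≤ ((i:ℝ)+2*j+1)^2 := by nlinarith
        calc ((i:ℝ)+2*j)*((i:ℝ)+2*j+1) * (2*(j:ℝ))^(2*m-2)
            ≤ ((i:ℝ)+2*j+1)^2 * ((i:ℝ)+2*j+1)^(2*m-2) := by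
              apply mul_le_mul hb2 hb1 (by positivity) (by positivity)
          _ = ((i:ℝ)+2*j+1)^(2*m) := by rw [← pow_add]; congr 1; omega
      rw [hc, div_mul_eq_mul_div, mul_one_div, div_div]
      have hposd : (0:ℝ) < ((i:ℝ)+2*j)*((i:ℝ)+2*j+1) * (2*(j:ℝ))^(2*m-2) :=
        mul_pos (mul_pos ha (by linarith)) (pow_pos (by linarith) _)
      apply div_le_div_of_nonneg_left (by norm_num) hposd hkey
    calc ∑ i ∈ Finset.range K, f (i + 2*j) ≤ ∑ i ∈ Finset.range K, (G i - G (i+1)) :=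
          Finset.sum_le_sum hterm
      _ = G 0 - G K := Finset.sum_range_sub' G K
      _ ≤ G 0 := by
          have : 0 ≤ G K := by
            simp only [hG]
            have := Nat.cast_nonneg (α := ℝ) K
            positivity
          linarith
      _ ≤ 1/R := by
          simp only [hG, hc]
          push_cast
          rw [div_mul_eq_mul_div, mul_one_div, div_div]
          have hd0 : (0:ℝ) < (0+2*(j:ℝ))*(2*(j:ℝ))^(2*m-2) :=
            mul_pos (by linarith) (pow_pos (by linarith) _)
          rw [div_le_div_iff₀ hd0 hRpos]
          have hpow : (2*(j:ℝ))^(2*m-1) = (2*(j:ℝ))^(2*m-2) * (2*(j:ℝ)) := by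
            rw [← pow_succ]; congr 1; omega
          have h3 : 2 * R ≤ (2*(j:ℝ))^(2*m-1) := by
            rw [mul_pow, hR]
            have h2 : (2:ℝ) ≤ 2^(2*m-1) := by
              calc (2:ℝ) = 2^1 := (pow_one 2).symm
                _ ≤ 2^(2*m-1) := pow_le_pow_right₀ (by norm_num) (by omega)
            nlinarith [pow_nonneg (by norm_num : (0:ℝ) ≤ 2) (2*m-1),
              pow_nonneg (Nat.cast_nonneg (α := ℝ) j) (2*m-1)]
          nlinarith [h3, hpow]
  -- front estimate
  have hharm : ∑ i ∈ Finset.range j, ((i:ℝ)+1)⁻¹ ≤ 1 + Real.log j := by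
    have h := harmonic_le_one_add_log j
    have heq : ((harmonic j : ℚ) : ℝ) = ∑ i ∈ Finset.range j, ((i:ℝ)+1)⁻¹ := by
      rw [harmonic]; push_cast; ring
    rw [heq] at h; exact h
  have hDsum : ∑ i ∈ Finset.range (2*j), 1/(D i) ≤ 3 * (1 + Real.log j) := by
    rw [two_mul, Finset.sum_range_add]
    have hch2 : ∑ i ∈ Finset.range j, 1/(D (j + i)) = ∑ i ∈ Finset.range j, ((i:ℝ)+1)⁻¹ := by
      apply Finset.sum_congr rfl
      intro i _
      have hDe : D (j + i) = (i:ℝ)+1 := by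
        simp only [hD]
        rw [show ((((j+i:ℕ)):ℝ)+1 - (j:ℝ)) = (i:ℝ)+1 by push_cast; ring]
        rw [abs_of_nonneg (by positivity)]
        exact max_eq_left (by linarith [Nat.cast_nonneg (α := ℝ) i])
      rw [hDe, one_div]
    have hch1 : ∑ i ∈ Finset.range j, 1/(D i) ≤ 2 * ∑ i ∈ Finset.range j, ((i:ℝ)+1)⁻¹ := by
      have hstep : ∀ i ∈ Finset.range j, 1/(D i) ≤ 2/((j:ℝ) - i) := by
        intro i hi
        have hij : i < j := Finset.mem_range.mp hi
        have hijR : (i:ℝ)+1 ≤ j := by exact_mod_cast Nat.succ_le_of_lt hij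
        have habs : |((i:ℝ)+1) - j| = (j:ℝ) - i - 1 := by
          rw [abs_sub_comm, abs_of_nonneg (by linarith)]; ring
        have hd2 : ((j:ℝ) - i)/2 ≤ D i := by
          simp only [hD, habs]
          rcases le_total ((j:ℝ) - i) 2 with h | h
          · calc ((j:ℝ) - i)/2 ≤ 1 := by linarith
              _ ≤ _ := le_max_right _ _
          · calc ((j:ℝ) - i)/2 ≤ (j:ℝ) - i - 1 := by linarith
              _ ≤ _ := le_max_left _ _
        have hpos : (0:ℝ) < ((j:ℝ) - i)/2 := by
          have := Nat.cast_nonneg (α := ℝ) i; linarith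
        calc 1/(D i) ≤ 1/(((j:ℝ) - i)/2) := one_div_le_one_div_of_le hpos hd2
          _ = 2/((j:ℝ) - i) := by rw [one_div_div]
      have hrefl : ∑ i ∈ Finset.range j, 2/((j:ℝ) - i)
          = ∑ i ∈ Finset.range j, 2*((i:ℝ)+1)⁻¹ := by
        have := Finset.sum_range_reflect (fun l : ℕ => 2*((l:ℝ)+1)⁻¹) j
        rw [← this]
        apply Finset.sum_congr rfl
        intro i hi
        have hij : i < j := Finset.mem_range.mp hi
        have hcast : (((j - 1 - i:ℕ)):ℝ) = (j:ℝ) - 1 - i := by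
          have h1 : ((1:ℕ)) + i ≤ j := by omega
          rw [show j - 1 - i = j - (1 + i) by omega, Nat.cast_sub h1]
          push_cast; ring
        rw [hcast, show ((j:ℝ) - 1 - i + 1) = (j:ℝ) - i by ring, div_eq_mul_inv]
      calc ∑ i ∈ Finset.range j, 1/(D i) ≤ ∑ i ∈ Finset.range j, 2/((j:ℝ) - i) :=
            Finset.sum_le_sum hstep
        _ = ∑ i ∈ Finset.range j, 2*((i:ℝ)+1)⁻¹ := hrefl
        _ = 2 * ∑ i ∈ Finset.range j, ((i:ℝ)+1)⁻¹ := by rw [Finset.mul_sum]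
    rw [hch2]
    linarith
  have hfront : ∑ i ∈ Finset.range (2*j), f i ≤ (2/R) * (3 * (1 + Real.log j)) := by
    calc ∑ i ∈ Finset.range (2*j), f i ≤ ∑ i ∈ Finset.range (2*j), (2/R) * (1/(D i)) := by
          apply Finset.sum_le_sum
          intro i _
          refine (hf_near i).trans_eq ?_
          rw [div_mul_div_comm, mul_one, mul_comm R (D i)]
      _ = (2/R) * ∑ i ∈ Finset.range (2*j), 1/(D i) := (Finset.mul_sum _ _ _).symm
      _ ≤ (2/R) * (3 * (1 + Real.log j)) := by
          apply mul_le_mul_of_nonneg_left hDsum (by positivity)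
  -- final arithmetic
  have hlog1 : (1:ℝ) ≤ Real.log j := by
    rw [Real.le_log_iff_exp_le (by linarith)]
    calc Real.exp 1 ≤ 2.7182818286 := Real.exp_one_lt_d9.le
      _ ≤ 3 := by norm_num
      _ ≤ (j:ℝ) := hj3
  have hcast : (((2*m-1:ℕ)):ℝ) = 2*(m:ℝ) - 1 := by
    rw [Nat.cast_sub (by omega : 1 ≤ 2*m)]; push_cast; ring
  have hrpow : (j:ℝ)^((1:ℝ)-2*(m:ℝ)) = 1/R := by
    rw [show (1:ℝ)-2*(m:ℝ) = -(((2*m-1:ℕ)):ℝ) by rw [hcast]; ring]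
    rw [Real.rpow_neg (by linarith), Real.rpow_natCast, hR, one_div]
  rw [hrpow]
  calc ∑' n, f n = (∑ i ∈ Finset.range (2*j), f i) + ∑' i, f (i + 2*j) := hsplit
    _ ≤ (2/R) * (3 * (1 + Real.log j)) + 1/R := add_le_add hfront htt
    _ = (7 + 6*Real.log j) * (1/R) := by ring
    _ ≤ (13*Real.log j) * (1/R) := by
        apply mul_le_mul_of_nonneg_right (by linarith) (by positivity)
    _ = 13 * (1/R) * Real.log j := by ring
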